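/- In the setting described in the context, there is a k-linear isomorphism between the cokernel of the induced map Cok(u,B) → Cok(u,C) and the cokernel of the induced map Cok(Y,g) → Cok(X,g). -/
import Mathlib


theorem cokernel_iso_of_hom_cokernels {k Λ : Type*} [CommRing k] [Ring Λ] [Algebra k Λ]
    {X Y Z A B C : Type*}
    [AddCommGroup X] [AddCommGroup Y] [AddCommGroup Z]
    [AddCommGroup A] [AddCommGroup B] [AddCommGroup C]
    [Module Λ X] [Module Λ Y] [Module Λ Z]
    [Module Λ A] [Module Λ B] [Module Λ C]
    [Module k A] [Module k B] [Module k C]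
    [IsScalarTower k Λ A] [IsScalarTower k Λ B] [IsScalarTower k Λ C]
    [SMulCommClass Λ k A] [SMulCommClass Λ k B] [SMulCommClass Λ k C]
    -- the short right exact sequence X → Y → Z → 0
    (u : X →ₗ[Λ] Y) (v : Y →ₗ[Λ] Z)
    (hv : Function.Surjective v) (huv : LinearMap.ker v = LinearMap.range u)
    -- the short left exact sequence 0 → A → B → C
    (f : A →ₗ[Λ] B) (g : B →ₗ[Λ] C)
    (hf : Function.Injective f) (hfg : LinearMap.ker g = LinearMap.range f)
    -- precomposition with u, defining Cok(u,B) and Cok(u,C)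
    (PuB : (Y →ₗ[Λ] B) →ₗ[k] (X →ₗ[Λ] B)) (hPuB : ∀ φ, PuB φ = φ ∘ₗ u)
    (PuC : (Y →ₗ[Λ] C) →ₗ[k] (X →ₗ[Λ] C)) (hPuC : ∀ φ, PuC φ = φ ∘ₗ u)
    -- postcomposition with g, defining Cok(Y,g) and Cok(X,g)
    (PgY : (Y →ₗ[Λ] B) →ₗ[k] (Y →ₗ[Λ] C)) (hPgY : ∀ φ, PgY φ = g ∘ₗ φ)
    (PgX : (X →ₗ[Λ] B) →ₗ[k] (X →ₗ[Λ] C)) (hPgX : ∀ φ, PgX φ = g ∘ₗ φ)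
    -- the induced map φ_B : Cok(u,B) → Cok(u,C), postcomposition with g
    (φB : ((X →ₗ[Λ] B) ⧸ LinearMap.range PuB) →ₗ[k] ((X →ₗ[Λ] C) ⧸ LinearMap.range PuC))
    (hφB : ∀ ψ : X →ₗ[Λ] B,
      φB (Submodule.Quotient.mk ψ) = Submodule.Quotient.mk (g ∘ₗ ψ))
    -- the induced map ψ_Y : Cok(Y,g) → Cok(X,g), precomposition with u
    (ψY : ((Y →ₗ[Λ] C) ⧸ LinearMap.range PgY) →ₗ[k] ((X →ₗ[Λ] C) ⧸ LinearMap.range PgX))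
    (hψY : ∀ φ : Y →ₗ[Λ] C,
      ψY (Submodule.Quotient.mk φ) = Submodule.Quotient.mk (φ ∘ₗ u)) :
    Nonempty ((((X →ₗ[Λ] C) ⧸ LinearMap.range PuC) ⧸ LinearMap.range φB) ≃ₗ[k]
      (((X →ₗ[Λ] C) ⧸ LinearMap.range PgX) ⧸ LinearMap.range ψY)) := by
  have hzero : ∀ (N : Submodule k (X →ₗ[Λ] C)), Submodule.map N.mkQ N = ⊥ := by
    intro N
    ext x
    simp only [Submodule.mem_map, Submodule.mem_bot]
    constructor
    · rintro ⟨m, hm, rfl⟩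
      simpa [Submodule.Quotient.mk_eq_zero] using hm
    · rintro rfl
      exact ⟨0, N.zero_mem, by simp⟩
  have hmap1 : LinearMap.range φB
      = Submodule.map (LinearMap.range PuC).mkQ (LinearMap.range PgX) := by
    ext x
    constructor
    · rintro ⟨y, rfl⟩
      obtain ⟨ψ, rfl⟩ := Submodule.Quotient.mk_surjective _ y
      exact ⟨g ∘ₗ ψ, ⟨ψ, hPgX ψ⟩, ((hφB ψ).symm : _)⟩
    · rintro ⟨m, ⟨ψ, rfl⟩, rfl⟩
      refine ⟨Submodule.Quotient.mk ψ, ?_⟩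
      rw [hφB, hPgX]
      rfl
  have hmap2 : LinearMap.range ψY
      = Submodule.map (LinearMap.range PgX).mkQ (LinearMap.range PuC) := by
    ext x
    constructor
    · rintro ⟨y, rfl⟩
      obtain ⟨φ, rfl⟩ := Submodule.Quotient.mk_surjective _ y
      exact ⟨φ ∘ₗ u, ⟨φ, hPuC φ⟩, ((hψY φ).symm : _)⟩
    · rintro ⟨m, ⟨φ, rfl⟩, rfl⟩
      refine ⟨Submodule.Quotient.mk φ, ?_⟩
      rw [hψY, hPuC]
      rfl
  have h1 : LinearMap.range φB = Submodule.map (LinearMap.range PuC).mkQ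
      (LinearMap.range PuC ⊔ LinearMap.range PgX) := by
    rw [Submodule.map_sup, hzero, bot_sup_eq, hmap1]
  have h2 : LinearMap.range ψY = Submodule.map (LinearMap.range PgX).mkQ
      (LinearMap.range PuC ⊔ LinearMap.range PgX) := by
    rw [Submodule.map_sup, hzero, sup_bot_eq, hmap2]
  exact ⟨((Submodule.quotEquivOfEq _ _ h1).trans
      (Submodule.quotientQuotientEquivQuotient _ _ le_sup_left)).trans
    ((Submodule.quotientQuotientEquivQuotient _ _ le_sup_right).symm.trans
      (Submodule.quotEquivOfEq _ _ h2.symm))⟩
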